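/- arXiv:2508.21645 — 2 statements merged into one kernel-verified Lean document; each statement's English description precedes it below -/
import Mathlib

section
/- Let R ≥ 1, 0 < C < 1, and l = log(R)/log(1/C). Let N ≥ 1 be an integer and let (a_j)_{j=0}^{N-1} be real numbers with |a_j| ≤ R for all j. Suppose S ⊆ {0,…,N-1} is a set of indices with |a_j| < C for all j ∉ S, and suppose the cardinality of S is at most ⌊Np⌋ for some real 0 ≤ p < 1/(2(l+1)). Then ∏_{j=0}^{N-1} |a_j| < C^{N/2}. -/
/-- Counting lemma: if at most `⌊N p⌋` of the factors are merely bounded by `R` and all the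
others are `< C`, with `p < 1/(2(l+1))` and `l = log R / log (1/C)`, then the product of the
absolute values is `< C^(N/2)`. -/
theorem stmt1 (R C l : ℝ) (hR : 1 ≤ R) (hC0 : 0 < C) (hC1 : C < 1)
    (hl : l = Real.log R / Real.log (1 / C))
    (N : ℕ) (hN : 1 ≤ N) (a : ℕ → ℝ)
    (ha : ∀ j < N, |a j| ≤ R)
    (S : Finset ℕ) (hSsub : S ⊆ Finset.range N)
    (haS : ∀ j < N, j ∉ S → |a j| < C)
    (p : ℝ) (hp0 : 0 ≤ p) (hp : p < 1 / (2 * (l + 1)))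
    (hcard : (S.card : ℤ) ≤ ⌊(N : ℝ) * p⌋) :
    ∏ j ∈ Finset.range N, |a j| < C ^ ((N : ℝ) / 2) := by
  have hlogC : Real.log C < 0 := Real.log_neg hC0 hC1
  have hlog1C : 0 < Real.log (1/C) := by
    rw [one_div, Real.log_inv]; linarith
  have hl0 : 0 ≤ l := hl ▸ div_nonneg (Real.log_nonneg hR) hlog1C.le
  have hlogR : Real.log R = -(l * Real.log C) := by
    rw [hl, one_div, Real.log_inv]
    field_simp
    rw [mul_div_assoc, div_self hlogC.ne, mul_one]
  have hNpos : (0:ℝ) < N := by exact_mod_cast hN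
  have hl1 : (0:ℝ) < l + 1 := by linarith
  have hk : (S.card : ℝ) ≤ (N:ℝ) * p := by
    calc (S.card:ℝ) ≤ ((⌊(N:ℝ)*p⌋ : ℤ) : ℝ) := by exact_mod_cast hcard
      _ ≤ _ := Int.floor_le _
  have h2 : (N:ℝ) * p * (2*(l+1)) < N := by
    have hpl : p * (2*(l+1)) < 1 := (lt_div_iff₀ (by linarith)).1 hp
    nlinarith [hNpos]
  have hkl : (S.card:ℝ) * (l+1) < (N:ℝ)/2 := by
    nlinarith [mul_le_mul_of_nonneg_right hk hl1.le, h2]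
  have hkN : S.card < N := by
    have hc0 : (0:ℝ) ≤ (S.card:ℝ) := Nat.cast_nonneg _
    have : (S.card:ℝ) < N := by nlinarith
    exact_mod_cast this
  set T := Finset.range N \ S with hTdef
  have hTcard : T.card = N - S.card := by
    rw [hTdef, Finset.card_sdiff_of_subset hSsub, Finset.card_range]
  have hTne : T.Nonempty := by
    rw [← Finset.card_pos, hTcard]; omega
  have hmem : ∀ j ∈ T, j < N ∧ j ∉ S := by
    intro j hj
    rw [hTdef, Finset.mem_sdiff, Finset.mem_range] at hj
    exact hj
  have hsplit : ∏ j ∈ Finset.range N, |a j| = (∏ j ∈ S, |a j|) * ∏ j ∈ T, |a j| := by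
    rw [mul_comm, Finset.prod_sdiff hSsub]
  have hRpos : (0:ℝ) < R := lt_of_lt_of_le one_pos hR
  have hfinal : R^(S.card) * C^(T.card) ≤ C ^ ((N:ℝ)/2) := by
    have hLHSpos : (0:ℝ) < R^S.card * C^T.card := by positivity
    rw [← Real.exp_log hLHSpos, Real.rpow_def_of_pos hC0]
    apply Real.exp_le_exp.2
    rw [Real.log_mul (by positivity) (by positivity), Real.log_pow, Real.log_pow, hlogR]
    have hm : (T.card:ℝ) = (N:ℝ) - S.card := by
      rw [hTcard]; push_cast [Nat.cast_sub hkN.le]; ring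
    rw [hm]
    have key : (N:ℝ)/2 ≤ -((S.card:ℝ) * l) + ((N:ℝ) - S.card) := by nlinarith [hkl]
    have := mul_le_mul_of_nonpos_right key hlogC.le
    nlinarith [this]
  by_cases h0 : ∃ j ∈ Finset.range N, a j = 0
  · obtain ⟨j, hj, hj0⟩ := h0
    have : ∏ j ∈ Finset.range N, |a j| = 0 :=
      Finset.prod_eq_zero hj (by rw [hj0, abs_zero])
    rw [this]
    exact Real.rpow_pos_of_pos hC0 _
  · push_neg at h0
    have hpos : ∀ j ∈ Finset.range N, 0 < |a j| := fun j hj =>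
      abs_pos.2 (h0 j hj)
    have hS_le : ∏ j ∈ S, |a j| ≤ R ^ S.card := by
      rw [← Finset.prod_const]
      exact Finset.prod_le_prod (fun j _ => abs_nonneg _)
        (fun j hj => ha j (Finset.mem_range.1 (hSsub hj)))
    have hT_lt : ∏ j ∈ T, |a j| < C ^ T.card := by
      rw [← Finset.prod_const]
      apply Finset.prod_lt_prod_of_nonempty _ _ hTne
      · intro j hj
        exact hpos j (Finset.mem_range.2 (hmem j hj).1)
      · intro j hj
        exact haS j (hmem j hj).1 (hmem j hj).2
    calc ∏ j ∈ Finset.range N, |a j| = (∏ j ∈ S, |a j|) * ∏ j ∈ T, |a j| := hsplit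
      _ < R ^ S.card * C ^ T.card := by
          apply mul_lt_mul' hS_le hT_lt (Finset.prod_nonneg fun j _ => abs_nonneg _)
          positivity
      _ ≤ C ^ ((N:ℝ)/2) := hfinal
end

section
/- Let b ≥ 2 and q be integers with 2q/b < 1/(2(l+1)) for some real l ≥ 0, let R ≥ 1 and 0 < C < 1 with l = log R / log(1/C). Suppose (a_j)_{j≥0} is a sequence of reals with |a_j| ≤ R for all j, and suppose there exists N₀ such that for all N ≥ N₀ the number of indices j ∈ {0,…,N−1} with |a_j| ≥ C is at most ⌊2(q/b)N⌋. Then limsup_{N→∞} (1/N) ∑_{j=0}^{N−1} log|a_j| ≤ (log C)/2 < 0. -/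
/-- If `|a_j| ≤ R` for all `j`, eventually at most `⌊2(q/b)N⌋` of the first `N` terms have
`|a_j| ≥ C`, and `2q/b < 1/(2(l+1))` with `l = log R / log(1/C)`, then the fibered Lyapunov
exponent `limsup (1/N) ∑ log |a_j|` is at most `(log C)/2 < 0`. -/
theorem stmt17 (b q : ℕ) (hb : 2 ≤ b) (l R C : ℝ) (hl : 0 ≤ l)
    (hR : 1 ≤ R) (hC0 : 0 < C) (hC1 : C < 1)
    (hlRC : l = Real.log R / Real.log (1 / C))
    (hq : 2 * (q : ℝ) / b < 1 / (2 * (l + 1)))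
    (a : ℕ → ℝ) (ha0 : ∀ j, a j ≠ 0) (haR : ∀ j, |a j| ≤ R)
    (N0 : ℕ)
    (hN0 : ∀ N, N0 ≤ N →
      ((Finset.range N).filter (fun j => C ≤ |a j|)).card ≤ ⌊2 * ((q : ℝ) / b) * N⌋₊) :
    Filter.limsup
        (fun N : ℕ => ((1 / (N : ℝ)) * ∑ j ∈ Finset.range N, Real.log |a j| : EReal))
        Filter.atTop ≤ ((Real.log C / 2 : ℝ) : EReal) ∧
      Real.log C / 2 < 0 := by
  have hlogC : Real.log C < 0 := Real.log_neg hC0 hC1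
  have hC1' : 1 < 1 / C := by rw [lt_div_iff₀ hC0]; linarith
  have hlog1C : 0 < Real.log (1 / C) := Real.log_pos hC1'
  have hlog1C' : Real.log (1 / C) = -Real.log C := by
    rw [one_div, Real.log_inv]
  have hlogR : Real.log R = l * Real.log (1 / C) := by
    rw [hlRC]; field_simp
  have hlogR0 : 0 ≤ Real.log R := Real.log_nonneg hR
  refine ⟨?_, by linarith⟩
  refine Filter.limsup_le_of_le (by isBoundedDefault) ?_
  filter_upwards [Filter.eventually_ge_atTop (max N0 1)] with N hN
  have hN0' : N0 ≤ N := le_trans (le_max_left _ _) hN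
  have hN1 : 1 ≤ N := le_trans (le_max_right _ _) hN
  have hNpos : (0:ℝ) < N := by exact_mod_cast hN1
  have hco : (1 / ((N:ℝ):EReal)) * ((∑ j ∈ Finset.range N, Real.log |a j| : ℝ) : EReal)
      = (((1/(N:ℝ)) * ∑ j ∈ Finset.range N, Real.log |a j| : ℝ) : EReal) := by
    norm_cast
  rw [hco, EReal.coe_le_coe_iff]
  set S := (Finset.range N).filter (fun j => C ≤ |a j|) with hS
  set Sc := (Finset.range N).filter (fun j => ¬ C ≤ |a j|) with hSc
  have hcard : S.card + Sc.card = N := by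
    rw [hS, hSc, Finset.card_filter_add_card_filter_not, Finset.card_range]
  have hB : (S.card : ℝ) ≤ 2 * ((q:ℝ)/b) * N := by
    have h1 := hN0 N hN0'
    have h2 : ((⌊2 * ((q : ℝ) / b) * N⌋₊ : ℕ) : ℝ) ≤ 2 * ((q:ℝ)/b) * N :=
      Nat.floor_le (by positivity)
    calc (S.card : ℝ) ≤ (⌊2 * ((q : ℝ) / b) * N⌋₊ : ℝ) := by exact_mod_cast h1
      _ ≤ _ := h2
  have hsplit : ∑ j ∈ Finset.range N, Real.log |a j|
      = ∑ j ∈ S, Real.log |a j| + ∑ j ∈ Sc, Real.log |a j| :=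
    (Finset.sum_filter_add_sum_filter_not _ _ _).symm
  have hsumS : ∑ j ∈ S, Real.log |a j| ≤ S.card * Real.log R := by
    rw [← nsmul_eq_mul]
    apply Finset.sum_le_card_nsmul
    intro j _
    exact Real.log_le_log (abs_pos.mpr (ha0 j)) (haR j)
  have hsumSc : ∑ j ∈ Sc, Real.log |a j| ≤ Sc.card * Real.log C := by
    rw [← nsmul_eq_mul]
    apply Finset.sum_le_card_nsmul
    intro j hj
    rw [hSc, Finset.mem_filter] at hj
    exact Real.log_le_log (abs_pos.mpr (ha0 j)) (le_of_lt (not_le.mp hj.2))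
  have hScard : (Sc.card : ℝ) = N - S.card := by
    have : (S.card : ℝ) + Sc.card = N := by exact_mod_cast hcard
    linarith
  have hdiff : Real.log R - Real.log C = (l + 1) * Real.log (1 / C) := by
    rw [hlogR]; linarith [hlog1C']
  have hdiff0 : 0 ≤ Real.log R - Real.log C := by linarith
  have hkey : ∑ j ∈ Finset.range N, Real.log |a j| ≤ N * (Real.log C / 2) := by
    have h1 : ∑ j ∈ Finset.range N, Real.log |a j|
        ≤ S.card * (Real.log R - Real.log C) + N * Real.log C := by
      rw [hsplit]
      have := hsumSc
      rw [hScard] at this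
      nlinarith
    have h2 : (S.card : ℝ) * (Real.log R - Real.log C)
        ≤ (2 * ((q:ℝ)/b) * N) * (Real.log R - Real.log C) :=
      mul_le_mul_of_nonneg_right hB hdiff0
    have hq' : 2 * ((q:ℝ)/b) ≤ 1 / (2 * (l + 1)) := by
      have : 2 * (q : ℝ) / b = 2 * ((q:ℝ)/b) := by ring
      linarith [hq, this ▸ hq]
    have hl1 : (0:ℝ) < l + 1 := by linarith
    have h3 : (2 * ((q:ℝ)/b) * N) * (Real.log R - Real.log C)
        ≤ N * (Real.log (1/C) / 2) := by
      rw [hdiff]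
      have hqb : 0 ≤ 2 * ((q:ℝ)/b) := by positivity
      have := mul_le_mul_of_nonneg_right hq' (le_of_lt (mul_pos hl1 hlog1C))
      rw [div_mul_eq_mul_div, one_mul] at this
      calc (2 * ((q:ℝ)/b) * N) * ((l + 1) * Real.log (1 / C))
          = (2 * ((q:ℝ)/b) * ((l+1) * Real.log (1/C))) * N := by ring
        _ ≤ ((l + 1) * Real.log (1 / C) / (2 * (l + 1))) * N := by
            apply mul_le_mul_of_nonneg_right _ (le_of_lt hNpos)
            exact this
        _ = N * (Real.log (1/C) / 2) := by field_simp
    have : Real.log (1/C) / 2 = -(Real.log C)/2 := by rw [hlog1C']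
    nlinarith
  calc (1 / (N:ℝ)) * ∑ j ∈ Finset.range N, Real.log |a j|
      ≤ (1 / (N:ℝ)) * (N * (Real.log C / 2)) := by
        apply mul_le_mul_of_nonneg_left hkey (by positivity)
    _ = Real.log C / 2 := by field_simp
end
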